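/- arXiv:1901.05036 — 3 statements merged into one kernel-verified Lean document; each statement's English description precedes it below -/
import Mathlib

section
/- Let $\nu$ be a compactly supported Borel probability measure on $\mathbb{R}$, let $I = \int \lambda \, d\nu(\lambda)$, and let $(a_1, b_1)$ be an open interval containing $I$. Then there exists a subinterval $(a_2, b_2) \subseteq (a_1, b_1)$ containing $I$ such that $\int s_{a_2,b_2}(\lambda)\, d\nu(\lambda) = I$, where $s_{\alpha,\beta}(u) = \max(\alpha, \min(\beta, u))$ is the cut-off function. -/
open MeasureTheory

private lemma cutoff_decomp (a b lam : ℝ) (hab : a ≤ b) :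
    max a (min b lam) = lam + max (a - lam) 0 - max (lam - b) 0 := by
  simp only [max_def, min_def]
  split_ifs <;> linarith

theorem cutoff_mean_interval (ν : Measure ℝ) [IsProbabilityMeasure ν]
    (M : ℝ) (hsupp : ν {x : ℝ | M < |x|} = 0)
    (a₁ b₁ : ℝ) (ha : a₁ < ∫ lam, lam ∂ν) (hb : (∫ lam, lam ∂ν) < b₁) :
    ∃ a₂ b₂ : ℝ, a₁ ≤ a₂ ∧ b₂ ≤ b₁ ∧ a₂ < ∫ lam, lam ∂ν ∧ (∫ lam, lam ∂ν) < b₂ ∧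
      ∫ lam, max a₂ (min b₂ lam) ∂ν = ∫ lam, lam ∂ν := by
  set I : ℝ := ∫ lam, lam ∂ν with hI
  -- integrability of the identity
  have hbdd : ∀ᵐ x ∂ν, ‖x‖ ≤ M := by
    rw [ae_iff]
    convert hsupp using 2
    ext x
    simp [Real.norm_eq_abs]
  have hint : Integrable (fun lam : ℝ => lam) ν :=
    ⟨aestronglyMeasurable_id, HasFiniteIntegral.of_bounded hbdd⟩
  -- integrability of the positive parts
  have hintP : ∀ a : ℝ, Integrable (fun lam => max (a - lam) 0) ν := fun a =>
    ((integrable_const a).sub hint).pos_part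
  have hintQ : ∀ b : ℝ, Integrable (fun lam => max (lam - b) 0) ν := fun b =>
    (hint.sub (integrable_const b)).pos_part
  set P : ℝ → ℝ := fun a => ∫ lam, max (a - lam) 0 ∂ν with hPdef
  set Q : ℝ → ℝ := fun b => ∫ lam, max (lam - b) 0 ∂ν with hQdef
  -- key decomposition of the integral of the cutoff
  have hkey : ∀ a b : ℝ, a ≤ b →
      ∫ lam, max a (min b lam) ∂ν = I + P a - Q b := by
    intro a b hab
    have : (fun lam : ℝ => max a (min b lam)) =
        fun lam => (lam + max (a - lam) 0) - max (lam - b) 0 := by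
      funext lam
      exact cutoff_decomp a b lam hab
    have hi1 : Integrable (fun lam : ℝ => lam + max (a - lam) 0) ν := hint.add (hintP a)
    rw [this, integral_sub hi1 (hintQ b), integral_add hint (hintP a)]
  -- P and Q are Lipschitz, hence continuous
  have hPlip : LipschitzWith 1 P := by
    apply LipschitzWith.of_dist_le_mul
    intro x y
    rw [NNReal.coe_one, one_mul, Real.dist_eq, Real.dist_eq, hPdef]
    rw [← integral_sub (hintP x) (hintP y)]
    calc |∫ lam, (max (x - lam) 0 - max (y - lam) 0) ∂ν|
        ≤ ∫ lam, |max (x - lam) 0 - max (y - lam) 0| ∂ν := by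
          simpa [Real.norm_eq_abs] using
            norm_integral_le_integral_norm (fun lam => max (x - lam) 0 - max (y - lam) 0) (μ := ν)
      _ ≤ ∫ _lam, |x - y| ∂ν := by
          apply integral_mono ((hintP x).sub (hintP y)).abs (integrable_const _)
          intro lam
          calc |max (x - lam) 0 - max (y - lam) 0| ≤ |(x - lam) - (y - lam)| :=
                abs_max_sub_max_le_abs _ _ _
            _ = |x - y| := by ring_nf
      _ = |x - y| := by simp
  have hQlip : LipschitzWith 1 Q := by
    apply LipschitzWith.of_dist_le_mul
    intro x y
    rw [NNReal.coe_one, one_mul, Real.dist_eq, Real.dist_eq, hQdef]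
    rw [← integral_sub (hintQ x) (hintQ y)]
    calc |∫ lam, (max (lam - x) 0 - max (lam - y) 0) ∂ν|
        ≤ ∫ lam, |max (lam - x) 0 - max (lam - y) 0| ∂ν := by
          simpa [Real.norm_eq_abs] using
            norm_integral_le_integral_norm (fun lam => max (lam - x) 0 - max (lam - y) 0) (μ := ν)
      _ ≤ ∫ _lam, |x - y| ∂ν := by
          apply integral_mono ((hintQ x).sub (hintQ y)).abs (integrable_const _)
          intro lam
          calc |max (lam - x) 0 - max (lam - y) 0| ≤ |(lam - x) - (lam - y)| :=
                abs_max_sub_max_le_abs _ _ _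
            _ = |x - y| := by rw [abs_sub_comm]; ring_nf
      _ = |x - y| := by simp
  -- monotonicity
  have hPmono : Monotone P := by
    intro x y hxy
    apply integral_mono (hintP x) (hintP y)
    intro lam
    exact max_le_max (by linarith) le_rfl
  have hQanti : Antitone Q := by
    intro x y hxy
    apply integral_mono (hintQ y) (hintQ x)
    intro lam
    exact max_le_max (by linarith) le_rfl
  have hPnonneg : ∀ a, 0 ≤ P a := fun a =>
    integral_nonneg fun lam => le_max_right _ _
  have hQnonneg : ∀ b, 0 ≤ Q b := fun b =>
    integral_nonneg fun lam => le_max_right _ _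
  -- P I = Q I
  have hPQI : P I = Q I := by
    have h1 := hkey I I le_rfl
    have h2 : ∫ lam, max I (min I lam) ∂ν = I := by
      have : (fun lam : ℝ => max I (min I lam)) = fun _ => I := by
        funext lam
        exact max_eq_left (min_le_left _ _)
      rw [this, integral_const]
      simp
    rw [h2] at h1
    linarith
  -- degenerate case: P a₁ = P I forces everything to vanish
  have hdegP : P a₁ = P I → P a₁ = 0 ∧ Q I = 0 := by
    intro hPa
    set g : ℝ → ℝ := fun lam => max (I - lam) 0 - max (a₁ - lam) 0 with hg
    have hgint : Integrable g ν := (hintP I).sub (hintP a₁)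
    have hgnn : 0 ≤ g := by
      intro lam
      simp only [hg, Pi.zero_apply, sub_nonneg]
      exact max_le_max (by linarith) le_rfl
    have hgzero : ∫ lam, g lam ∂ν = 0 := by
      rw [hg]
      simp only
      rw [integral_sub (hintP I) (hintP a₁)]
      change P I - P a₁ = 0
      linarith
    have hae : ∀ᵐ lam ∂ν, I ≤ lam := by
      have := (integral_eq_zero_iff_of_nonneg hgnn hgint).mp hgzero
      filter_upwards [this] with lam hlam
      by_contra hcon
      push_neg at hcon
      have h1 : max (I - lam) 0 = I - lam := max_eq_left (by linarith)
      have h2 : max (a₁ - lam) 0 < I - lam := by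
        rcases le_total (a₁ - lam) 0 with h | h
        · rw [max_eq_right h]; linarith
        · rw [max_eq_left h]; linarith
      have : g lam > 0 := by simp only [hg]; rw [h1]; linarith
      simp only [Pi.zero_apply] at hlam
      linarith [hlam]
    have hQI : Q I = 0 := by
      have hcongr : (fun lam : ℝ => max (lam - I) 0) =ᵐ[ν] fun lam => lam - I := by
        filter_upwards [hae] with lam hlam
        exact max_eq_left (by linarith)
      have : Q I = ∫ lam, (lam - I) ∂ν := integral_congr_ae hcongr
      rw [this, integral_sub hint (integrable_const I), integral_const]
      simp [← hI]
    exact ⟨by rw [hPa, hPQI, hQI], hQI⟩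
  -- degenerate case: Q b₁ = Q I forces everything to vanish
  have hdegQ : Q b₁ = Q I → Q b₁ = 0 ∧ P I = 0 := by
    intro hQb
    set g : ℝ → ℝ := fun lam => max (lam - I) 0 - max (lam - b₁) 0 with hg
    have hgint : Integrable g ν := (hintQ I).sub (hintQ b₁)
    have hgnn : 0 ≤ g := by
      intro lam
      simp only [hg, Pi.zero_apply, sub_nonneg]
      exact max_le_max (by linarith) le_rfl
    have hgzero : ∫ lam, g lam ∂ν = 0 := by
      rw [hg]
      simp only
      rw [integral_sub (hintQ I) (hintQ b₁)]
      change Q I - Q b₁ = 0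
      linarith
    have hae : ∀ᵐ lam ∂ν, lam ≤ I := by
      have := (integral_eq_zero_iff_of_nonneg hgnn hgint).mp hgzero
      filter_upwards [this] with lam hlam
      by_contra hcon
      push_neg at hcon
      have h1 : max (lam - I) 0 = lam - I := max_eq_left (by linarith)
      have h2 : max (lam - b₁) 0 < lam - I := by
        rcases le_total (lam - b₁) 0 with h | h
        · rw [max_eq_right h]; linarith
        · rw [max_eq_left h]; linarith
      have : g lam > 0 := by simp only [hg]; rw [h1]; linarith
      simp only [Pi.zero_apply] at hlam
      linarith [hlam]
    have hPI : P I = 0 := by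
      have hcongr : (fun lam : ℝ => max (I - lam) 0) =ᵐ[ν] fun lam => I - lam := by
        filter_upwards [hae] with lam hlam
        exact max_eq_left (by linarith)
      have : P I = ∫ lam, (I - lam) ∂ν := integral_congr_ae hcongr
      rw [this, integral_sub (integrable_const I) hint, integral_const]
      simp [← hI]
    exact ⟨by rw [hQb, ← hPQI, hPI], hPI⟩
  by_cases h1 : P a₁ = P I
  · obtain ⟨hPa0, hQI0⟩ := hdegP h1
    have hQb0 : Q b₁ = 0 :=
      le_antisymm (hQI0 ▸ hQanti hb.le) (hQnonneg b₁)
    exact ⟨a₁, b₁, le_rfl, le_rfl, ha, hb, by rw [hkey a₁ b₁ (by linarith), hPa0, hQb0]; ring⟩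
  by_cases h2 : Q b₁ = Q I
  · obtain ⟨hQb0, hPI0⟩ := hdegQ h2
    have hPa0 : P a₁ = 0 :=
      le_antisymm (hPI0 ▸ hPmono ha.le) (hPnonneg a₁)
    exact ⟨a₁, b₁, le_rfl, le_rfl, ha, hb, by rw [hkey a₁ b₁ (by linarith), hPa0, hQb0]; ring⟩
  have hPa_lt : P a₁ < P I := lt_of_le_of_ne (hPmono ha.le) h1
  have hQb_lt : Q b₁ < Q I := lt_of_le_of_ne (hQanti hb.le) h2
  rcases le_total (Q b₁) (P a₁) with hle | hle
  · -- move b: find b₂ ∈ (I, b₁] with Q b₂ = P a₁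
    have hsub : Set.Icc (Q b₁) (Q I) ⊆ Q '' Set.Icc I b₁ :=
      intermediate_value_Icc' hb.le hQlip.continuous.continuousOn
    obtain ⟨b₂, hb₂mem, hQb₂⟩ := hsub ⟨hle, by rw [← hPQI]; exact hPa_lt.le⟩
    have hIb₂ : I < b₂ := by
      rcases lt_or_eq_of_le hb₂mem.1 with h | h
      · exact h
      · exfalso; rw [← h] at hQb₂; rw [← hPQI] at hQb₂; linarith
    refine ⟨a₁, b₂, le_rfl, hb₂mem.2, ha, hIb₂, ?_⟩
    rw [hkey a₁ b₂ (by linarith), hQb₂]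
    ring
  · -- move a: find a₂ ∈ [a₁, I) with P a₂ = Q b₁
    have hsub : Set.Icc (P a₁) (P I) ⊆ P '' Set.Icc a₁ I :=
      intermediate_value_Icc ha.le hPlip.continuous.continuousOn
    obtain ⟨a₂, ha₂mem, hPa₂⟩ := hsub ⟨hle, by rw [hPQI]; exact hQb_lt.le⟩
    have hIa₂ : a₂ < I := by
      rcases lt_or_eq_of_le ha₂mem.2 with h | h
      · exact h
      · exfalso; rw [h] at hPa₂; rw [hPQI] at hPa₂; linarith
    refine ⟨a₂, b₁, ha₂mem.1, le_rfl, hIa₂, hb, ?_⟩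
    rw [hkey a₂ b₁ (by linarith), hPa₂]
    ring
end

section
/- Let $g \in BV_{loc}(\mathbb{R})$ and $f \in C(\mathbb{R})$. Define $T_g(f)(u) = g(u-)f(u) - \int_0^u f(s)\,dg(s)$, where $g(u-)$ is the left limit of $g$ at $u$ and the integral is the Lebesgue–Stieltjes integral over $[0,u)$ for $u > 0$ (with sign convention $-\int_{[u,0)}$ for $u \le 0$). Then the function $u \mapsto T_g(f)(u)$ is continuous on $\mathbb{R}$, even when $g$ is discontinuous. -/
open MeasureTheory Function Set Filter Topology

private noncomputable def Jint (f : ℝ → ℝ) (μ : Measure ℝ) (u : ℝ) : ℝ :=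
  if 0 ≤ u then ∫ s in Set.Ico (0:ℝ) u, f s ∂μ else -∫ s in Set.Ico u (0:ℝ), f s ∂μ

private lemma aux_cont (g f : ℝ → ℝ) (hg : Monotone g) (μ : Measure ℝ)
    (hμ : ∀ a b : ℝ, a ≤ b →
      μ (Set.Ico a b) = ENNReal.ofReal (leftLim g b - leftLim g a))
    (hf : Continuous f) :
    Continuous (fun u : ℝ => leftLim g u * f u - Jint f μ u) := by
  have hll : Monotone (leftLim g) := by
    intro a b hab
    rcases eq_or_lt_of_le hab with rfl | h
    · exact le_rfl
    · exact (hg.leftLim_le le_rfl).trans (hg.le_leftLim h)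
  have hfin : ∀ a b : ℝ, μ (Set.Ico a b) < ⊤ := by
    intro a b
    rcases le_or_gt a b with hab | hab
    · rw [hμ a b hab]; exact ENNReal.ofReal_lt_top
    · rw [Set.Ico_eq_empty (not_lt.2 hab.le)]; simp
  have htr : ∀ a b : ℝ, a ≤ b →
      (μ (Set.Ico a b)).toReal = leftLim g b - leftLim g a := by
    intro a b hab
    rw [hμ a b hab, ENNReal.toReal_ofReal (sub_nonneg.2 (hll hab))]
  have hint : ∀ a b : ℝ, IntegrableOn f (Set.Ico a b) μ := by
    intro a b
    obtain ⟨C, hC⟩ := IsCompact.exists_bound_of_continuousOn (isCompact_Icc (a := a) (b := b))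
      hf.continuousOn
    refine Measure.integrableOn_of_bounded (hfin a b).ne hf.aestronglyMeasurable
      (M := C) ?_
    exact (ae_restrict_iff' measurableSet_Ico).2
      (ae_of_all _ fun x hx => hC x (Set.Ico_subset_Icc_self hx))
  have hadd : ∀ a b c : ℝ, a ≤ b → b ≤ c →
      (∫ s in Set.Ico a c, f s ∂μ)
        = (∫ s in Set.Ico a b, f s ∂μ) + ∫ s in Set.Ico b c, f s ∂μ := by
    intro a b c hab hbc
    rw [← Set.Ico_union_Ico_eq_Ico hab hbc,
      setIntegral_union Set.Ico_disjoint_Ico_same measurableSet_Ico (hint a b) (hint b c)]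
  have hJ : ∀ a b : ℝ, a ≤ b → Jint f μ b = Jint f μ a + ∫ s in Set.Ico a b, f s ∂μ := by
    intro a b hab
    by_cases ha : (0:ℝ) ≤ a
    · have hb : (0:ℝ) ≤ b := ha.trans hab
      simp only [Jint, if_pos ha, if_pos hb]
      rw [hadd 0 a b ha hab]
    · by_cases hb : (0:ℝ) ≤ b
      · simp only [Jint, if_pos hb, if_neg ha]
        have := hadd a 0 b (le_of_not_ge ha) hb
        linarith
      · simp only [Jint, if_neg ha, if_neg hb]
        have := hadd a b 0 hab (le_of_not_ge hb)
        linarith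
  refine continuous_iff_continuousAt.2 fun u₀ => ?_
  apply continuousAt_iff_continuous_left'_right'.2
  constructor
  · -- left continuity
    have lcont : Tendsto (leftLim g) (𝓝[<] u₀) (𝓝 (leftLim g u₀)) := by
      have t1 : Tendsto (fun u : ℝ => 2 * u - u₀) (𝓝[<] u₀) (𝓝[<] u₀) := by
        apply tendsto_nhdsWithin_iff.2
        constructor
        · have : Tendsto (fun u : ℝ => 2 * u - u₀) (𝓝 u₀) (𝓝 (2 * u₀ - u₀)) :=
            ((continuous_const.mul continuous_id).sub continuous_const).tendsto u₀
          have h2 : 2 * u₀ - u₀ = u₀ := by ring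
          rw [h2] at this
          exact this.mono_left nhdsWithin_le_nhds
        · filter_upwards [self_mem_nhdsWithin] with u hu
          simp only [Set.mem_Iio] at hu ⊢
          linarith
      refine tendsto_of_tendsto_of_tendsto_of_le_of_le'
        ((hg.tendsto_leftLim u₀).comp t1) (hg.tendsto_leftLim u₀) ?_ ?_
      · filter_upwards [self_mem_nhdsWithin] with u hu
        simp only [Set.mem_Iio] at hu
        show g (2 * u - u₀) ≤ leftLim g u
        exact hg.le_leftLim (by linarith)
      · exact Eventually.of_forall fun u => hg.leftLim_le le_rfl
    have fmul : Tendsto (fun u : ℝ => leftLim g u * f u) (𝓝[<] u₀)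
        (𝓝 (leftLim g u₀ * f u₀)) :=
      lcont.mul ((hf.tendsto u₀).mono_left nhdsWithin_le_nhds)
    have intlim : Tendsto (fun u : ℝ => ∫ s in Set.Ico u u₀, f s ∂μ) (𝓝[<] u₀) (𝓝 0) := by
      obtain ⟨C, hC⟩ := IsCompact.exists_bound_of_continuousOn
        (isCompact_Icc (a := u₀ - 1) (b := u₀)) hf.continuousOn
      have hC0 : 0 ≤ C := by
        have := hC u₀ ⟨by linarith, le_rfl⟩
        exact (norm_nonneg _).trans this
      have blim : Tendsto (fun u : ℝ => C * (leftLim g u₀ - leftLim g u)) (𝓝[<] u₀)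
          (𝓝 0) := by
        have : Tendsto (fun u : ℝ => C * (leftLim g u₀ - leftLim g u)) (𝓝[<] u₀)
            (𝓝 (C * (leftLim g u₀ - leftLim g u₀))) :=
          (tendsto_const_nhds.sub lcont).const_mul C
        simpa using this
      apply squeeze_zero_norm' _ blim
      filter_upwards [Ioo_mem_nhdsLT_of_mem (a := u₀ - 1) (b := u₀) (c := u₀)
        ⟨by linarith, le_rfl⟩] with u hu
      have h1 : u₀ - 1 ≤ u := hu.1.le
      have h2 : u ≤ u₀ := hu.2.le
      calc ‖∫ s in Set.Ico u u₀, f s ∂μ‖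
          ≤ C * (μ (Set.Ico u u₀)).toReal := by
            refine norm_setIntegral_le_of_norm_le_const (hfin u u₀) ?_
            intro x hx
            exact hC x ⟨h1.trans hx.1, hx.2.le⟩
        _ = C * (leftLim g u₀ - leftLim g u) := by rw [htr u u₀ h2]
    have Jlim : Tendsto (Jint f μ) (𝓝[<] u₀) (𝓝 (Jint f μ u₀)) := by
      have : Tendsto (fun u : ℝ => Jint f μ u₀ - ∫ s in Set.Ico u u₀, f s ∂μ) (𝓝[<] u₀)
          (𝓝 (Jint f μ u₀ - 0)) := tendsto_const_nhds.sub intlim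
      rw [sub_zero] at this
      apply this.congr'
      filter_upwards [self_mem_nhdsWithin] with u hu
      simp only [Set.mem_Iio] at hu
      rw [hJ u u₀ hu.le]; ring
    exact fmul.sub Jlim
  · -- right continuity
    have rcont : Tendsto (leftLim g) (𝓝[>] u₀) (𝓝 (rightLim g u₀)) := by
      have t1 : Tendsto (fun u : ℝ => (u₀ + u) / 2) (𝓝[>] u₀) (𝓝[>] u₀) := by
        apply tendsto_nhdsWithin_iff.2
        constructor
        · have : Tendsto (fun u : ℝ => (u₀ + u) / 2) (𝓝 u₀) (𝓝 ((u₀ + u₀) / 2)) :=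
            ((continuous_const.add continuous_id).div_const 2).tendsto u₀
          have h2 : (u₀ + u₀) / 2 = u₀ := by ring
          rw [h2] at this
          exact this.mono_left nhdsWithin_le_nhds
        · filter_upwards [self_mem_nhdsWithin] with u hu
          simp only [Set.mem_Ioi] at hu ⊢
          linarith
      refine tendsto_of_tendsto_of_tendsto_of_le_of_le'
        ((hg.tendsto_rightLim u₀).comp t1) (hg.tendsto_rightLim u₀) ?_ ?_
      · filter_upwards [self_mem_nhdsWithin] with u hu
        simp only [Set.mem_Ioi] at hu
        show g ((u₀ + u) / 2) ≤ leftLim g u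
        exact hg.le_leftLim (by linarith)
      · exact Eventually.of_forall fun u => hg.leftLim_le le_rfl
    have fmul : Tendsto (fun u : ℝ => leftLim g u * f u) (𝓝[>] u₀)
        (𝓝 (rightLim g u₀ * f u₀)) :=
      rcont.mul ((hf.tendsto u₀).mono_left nhdsWithin_le_nhds)
    have mlim : Tendsto (fun u : ℝ => (μ (Set.Ico u₀ u)).toReal) (𝓝[>] u₀)
        (𝓝 (rightLim g u₀ - leftLim g u₀)) := by
      have : Tendsto (fun u : ℝ => leftLim g u - leftLim g u₀) (𝓝[>] u₀)
          (𝓝 (rightLim g u₀ - leftLim g u₀)) := rcont.sub tendsto_const_nhds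
      apply this.congr'
      filter_upwards [self_mem_nhdsWithin] with u hu
      simp only [Set.mem_Ioi] at hu
      rw [htr u₀ u hu.le]
    have zlim : Tendsto (fun u : ℝ => ∫ s in Set.Ico u₀ u, (f s - f u₀) ∂μ) (𝓝[>] u₀)
        (𝓝 0) := by
      rw [Metric.tendsto_nhdsWithin_nhds]
      intro ε hε
      set M : ℝ := (μ (Set.Ico u₀ (u₀ + 1))).toReal + 1 with hM
      have hM1 : 0 < M := by positivity
      obtain ⟨δ₁, hδ₁, hδ₁'⟩ := Metric.continuousAt_iff.1 (hf.continuousAt (x := u₀))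
        (ε / (2 * M)) (by positivity)
      refine ⟨min δ₁ 1, by positivity, fun {u} hu hd => ?_⟩
      simp only [Set.mem_Ioi] at hu
      rw [Real.dist_eq] at hd
      have hle : u ≤ u₀ + 1 := by
        have := abs_lt.1 (lt_of_lt_of_le hd (min_le_right _ _))
        linarith [this.2]
      have hbound : ‖∫ s in Set.Ico u₀ u, (f s - f u₀) ∂μ‖
          ≤ (ε / (2 * M)) * (μ (Set.Ico u₀ u)).toReal := by
        refine norm_setIntegral_le_of_norm_le_const (hfin u₀ u) ?_
        intro x hx
        have hxd : dist x u₀ < δ₁ := by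
          rw [Real.dist_eq, abs_of_nonneg (sub_nonneg.2 hx.1)]
          have := abs_lt.1 (lt_of_lt_of_le hd (min_le_left _ _))
          linarith [hx.2, this.2]
        have := hδ₁' hxd
        rw [Real.dist_eq] at this
        exact le_of_lt this
      have hμle : (μ (Set.Ico u₀ u)).toReal ≤ M := by
        have : (μ (Set.Ico u₀ u)).toReal ≤ (μ (Set.Ico u₀ (u₀ + 1))).toReal :=
          ENNReal.toReal_mono (hfin _ _).ne
            (measure_mono (Set.Ico_subset_Ico_right hle))
        linarith
      rw [dist_zero_right]
      calc ‖∫ s in Set.Ico u₀ u, (f s - f u₀) ∂μ‖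
          ≤ (ε / (2 * M)) * (μ (Set.Ico u₀ u)).toReal := hbound
        _ ≤ (ε / (2 * M)) * M := by
            apply mul_le_mul_of_nonneg_left hμle (by positivity)
        _ = ε / 2 := by field_simp
        _ < ε := by linarith
    have intr : Tendsto (fun u : ℝ => ∫ s in Set.Ico u₀ u, f s ∂μ) (𝓝[>] u₀)
        (𝓝 (f u₀ * (rightLim g u₀ - leftLim g u₀))) := by
      have comb : Tendsto (fun u : ℝ =>
          (∫ s in Set.Ico u₀ u, (f s - f u₀) ∂μ) + (μ (Set.Ico u₀ u)).toReal * f u₀)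
          (𝓝[>] u₀) (𝓝 (0 + (rightLim g u₀ - leftLim g u₀) * f u₀)) :=
        zlim.add (mlim.mul tendsto_const_nhds)
      have heq : (0 : ℝ) + (rightLim g u₀ - leftLim g u₀) * f u₀
          = f u₀ * (rightLim g u₀ - leftLim g u₀) := by ring
      rw [heq] at comb
      apply comb.congr'
      filter_upwards [self_mem_nhdsWithin] with u hu
      simp only [Set.mem_Ioi] at hu
      rw [integral_sub (hint u₀ u) (integrableOn_const (hfin u₀ u).ne),
        setIntegral_const, smul_eq_mul, Measure.real]
      ring
    have Jlim : Tendsto (Jint f μ) (𝓝[>] u₀)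
        (𝓝 (Jint f μ u₀ + f u₀ * (rightLim g u₀ - leftLim g u₀))) := by
      have : Tendsto (fun u : ℝ => Jint f μ u₀ + ∫ s in Set.Ico u₀ u, f s ∂μ) (𝓝[>] u₀)
          (𝓝 (Jint f μ u₀ + f u₀ * (rightLim g u₀ - leftLim g u₀))) :=
        tendsto_const_nhds.add intr
      apply this.congr'
      filter_upwards [self_mem_nhdsWithin] with u hu
      simp only [Set.mem_Ioi] at hu
      rw [hJ u₀ u hu.le]
    have total := fmul.sub Jlim
    have heq : rightLim g u₀ * f u₀
        - (Jint f μ u₀ + f u₀ * (rightLim g u₀ - leftLim g u₀))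
        = leftLim g u₀ * f u₀ - Jint f μ u₀ := by ring
    rw [heq] at total
    exact total

/-- Continuity of `T_g(f)(u) = g(u-) f(u) - ∫_0^u f dg` for `g` locally of bounded
variation (written as a difference `g₁ - g₂` of monotone functions, with `μ₁, μ₂` the
associated Lebesgue–Stieltjes measures, normalized by `μᵢ[a,b) = gᵢ(b-) - gᵢ(a-)`),
and `f` continuous.  The integral `∫_0^u f dg` is over `[0,u)` for `u > 0`, with the
sign convention `-∫_{[u,0)}` for `u ≤ 0`. -/
theorem Tg_continuous (g g₁ g₂ f : ℝ → ℝ) (hg : g = g₁ - g₂)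
    (h₁ : Monotone g₁) (h₂ : Monotone g₂)
    (μ₁ μ₂ : Measure ℝ)
    (hμ₁ : ∀ a b : ℝ, a ≤ b →
      μ₁ (Set.Ico a b) = ENNReal.ofReal (leftLim g₁ b - leftLim g₁ a))
    (hμ₂ : ∀ a b : ℝ, a ≤ b →
      μ₂ (Set.Ico a b) = ENNReal.ofReal (leftLim g₂ b - leftLim g₂ a))
    (hf : Continuous f) :
    Continuous (fun u : ℝ =>
      leftLim g u * f u -
        (if 0 ≤ u then (∫ s in Set.Ico (0:ℝ) u, f s ∂μ₁) - ∫ s in Set.Ico (0:ℝ) u, f s ∂μ₂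
         else -((∫ s in Set.Ico u (0:ℝ), f s ∂μ₁) - ∫ s in Set.Ico u (0:ℝ), f s ∂μ₂))) := by
  have e : (fun u : ℝ =>
      leftLim g u * f u -
        (if 0 ≤ u then (∫ s in Set.Ico (0:ℝ) u, f s ∂μ₁) - ∫ s in Set.Ico (0:ℝ) u, f s ∂μ₂
         else -((∫ s in Set.Ico u (0:ℝ), f s ∂μ₁) - ∫ s in Set.Ico u (0:ℝ), f s ∂μ₂)))
      = fun u : ℝ => (leftLim g₁ u * f u - Jint f μ₁ u)
          - (leftLim g₂ u * f u - Jint f μ₂ u) := by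
    funext u
    have hl : leftLim g u = leftLim g₁ u - leftLim g₂ u := by
      apply leftLim_eq_of_tendsto
      subst hg
      exact (h₁.tendsto_leftLim u).sub (h₂.tendsto_leftLim u)
    rw [hl]
    simp only [Jint]
    split_ifs <;> ring
  rw [e]
  exact (aux_cont g₁ f h₁ μ₁ hμ₁ hf).sub (aux_cont g₂ f h₂ μ₂ hμ₂ hf)
end

section
/- Let $\mu$ be a nonnegative locally finite Borel measure on $\Pi = \mathbb{R}_+ \times \mathbb{R}^n$ which is periodic in $x$ with lattice $\mathbb{Z}^n$. Then for every $\alpha \in C_0(\mathbb{R}_+)$ and every $\beta \in C_0(\mathbb{R}^n)$ with $\int \beta(y)\,dy = 1$, one has $\lim_{k\to\infty} k^{-n} \int_\Pi \alpha(t)\beta(x/k)\,d\mu(t,x) = \int_{\mathbb{R}_+ \times \mathbb{T}^n} \alpha(t)\,d\mu(t,x)$, where on the right $\mu$ is regarded as a measure on $\mathbb{R}_+ \times \mathbb{T}^n$ via periodicity. -/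
open MeasureTheory Filter

/-- Fundamental domain `[0,1)^n` of the torus `ℝ^n/ℤ^n`. -/
def Box (n : ℕ) : Set (Fin n → ℝ) := Set.univ.pi fun _ => Set.Ico (0:ℝ) 1

namespace PMSL
variable {n : ℕ}

noncomputable def cz (e : Fin n → ℤ) : Fin n → ℝ := fun i => (e i : ℝ)

lemma measurableSet_box : MeasurableSet (Box n) :=
  MeasurableSet.univ_pi fun _ => measurableSet_Ico

lemma mem_box_iff_floor {x : Fin n → ℝ} : x ∈ Box n ↔ ∀ i, ⌊x i⌋ = 0 := by
  simp [Box, Set.mem_univ_pi, Int.floor_eq_zero_iff, Set.mem_Ico]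

lemma decomp {γ : Type*} [MeasurableSpace γ] (ν : Measure γ)
    (π : γ → (Fin n → ℝ)) (hπ : Measurable π)
    (T : (Fin n → ℤ) → γ → γ)
    (hT : ∀ e, MeasurePreserving (T e) ν ν)
    (hTemb : ∀ e, MeasurableEmbedding (T e))
    (hπT : ∀ e z, π (T e z) = π z + cz e)
    (F : γ → ℝ) (hF : Integrable F ν) :
    ∫ z, F z ∂ν = ∑' e : Fin n → ℤ, ∫ z in π ⁻¹' Box n, F (T e z) ∂ν := by
  set Φ : γ → (Fin n → ℤ) := fun z => fun i => ⌊π z i⌋ with hΦ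
  have hΦm : Measurable Φ :=
    measurable_pi_lambda _ fun i => Measurable.floor ((measurable_pi_apply i).comp hπ)
  have hPmeas : ∀ e : Fin n → ℤ, MeasurableSet (Φ ⁻¹' {e}) :=
    fun e => hΦm (measurableSet_singleton e)
  have hdisj : Pairwise (Function.onFun Disjoint fun e : Fin n → ℤ => Φ ⁻¹' {e}) := by
    intro e e' h
    exact Disjoint.preimage Φ (by simpa using h)
  have hcover : (⋃ e : Fin n → ℤ, Φ ⁻¹' {e}) = Set.univ := by
    ext z; simp
  calc ∫ z, F z ∂ν = ∫ z in ⋃ e : Fin n → ℤ, Φ ⁻¹' {e}, F z ∂ν := by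
        rw [hcover, Measure.restrict_univ]
    _ = ∑' e : Fin n → ℤ, ∫ z in Φ ⁻¹' {e}, F z ∂ν :=
        integral_iUnion hPmeas hdisj (hcover ▸ hF.integrableOn)
    _ = ∑' e, ∫ z in π ⁻¹' Box n, F (T e z) ∂ν := by
        refine tsum_congr fun e => ?_
        have hpre : T e ⁻¹' (Φ ⁻¹' {e}) = π ⁻¹' Box n := by
          ext z
          simp only [Set.mem_preimage, Set.mem_singleton_iff, funext_iff, hπT,
            mem_box_iff_floor, hΦ, Pi.add_apply]
          refine forall_congr' fun i => ?_
          rw [show cz e i = ((e i : ℤ) : ℝ) from rfl, Int.floor_add_intCast]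
          omega
        rw [← (hT e).setIntegral_preimage_emb (hTemb e) F (Φ ⁻¹' {e}), hpre]

noncomputable def Nset (M k : ℕ) : Finset (Fin n → ℤ) :=
  Fintype.piFinset fun _ => Finset.Icc (-(((M:ℤ)+2)*k)) (((M:ℤ)+2)*k)

lemma exists_bound {β : (Fin n → ℝ) → ℝ} (hβc : HasCompactSupport β) :
    ∃ M : ℕ, 1 ≤ M ∧ ∀ (y : Fin n → ℝ) (i : Fin n), (M : ℝ) ≤ |y i| → β y = 0 := by
  obtain ⟨r, hr⟩ := hβc.isBounded.subset_closedBall 0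
  refine ⟨⌈r⌉₊ + 1, Nat.le_add_left 1 _, fun y i hy => ?_⟩
  apply image_eq_zero_of_notMem_tsupport
  intro hmem
  have h1 : dist y 0 ≤ r := hr hmem
  have h2 : |y i| ≤ ‖y‖ := norm_le_pi_norm y i
  rw [dist_zero_right] at h1
  have h3 : r ≤ (⌈r⌉₊ : ℝ) := Nat.le_ceil r
  push_cast at hy
  linarith

lemma vanish {β : (Fin n → ℝ) → ℝ} {M : ℕ}
    (hM : ∀ (y : Fin n → ℝ) (i : Fin n), (M : ℝ) ≤ |y i| → β y = 0)
    {k : ℕ} (hk : 1 ≤ k) {e : Fin n → ℤ} (he : e ∉ Nset M k)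
    (y : Fin n → ℝ) (hy : ∀ i, |y i| ≤ 2) : β ((k:ℝ)⁻¹ • (y + cz e)) = 0 := by
  rw [Nset, Fintype.mem_piFinset] at he
  push_neg at he
  obtain ⟨i, hi⟩ := he
  rw [Finset.mem_Icc] at hi
  have hei : ((M:ℤ)+2)*k + 1 ≤ |e i| := by
    rcases abs_cases (e i) with ⟨h1, h2⟩ | ⟨h1, h2⟩ <;> omega
  have heiR : ((M:ℝ)+2)*k + 1 ≤ |(e i : ℝ)| := by exact_mod_cast hei
  have hk1 : (1:ℝ) ≤ (k:ℝ) := by exact_mod_cast hk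
  have hkpos : (0:ℝ) < (k:ℝ) := by linarith
  apply hM _ i
  have habs : (M:ℝ) * k ≤ |y i + (e i : ℝ)| := by
    have h3 := abs_sub_abs_le_abs_sub (e i : ℝ) (-(y i))
    rw [sub_neg_eq_add, abs_neg, add_comm] at h3
    have h2 := hy i
    nlinarith [abs_nonneg (y i + (e i : ℝ))]
  have : ((k:ℝ)⁻¹ • (y + cz e)) i = (k:ℝ)⁻¹ * (y i + (e i : ℝ)) := rfl
  rw [this, abs_mul, abs_of_nonneg (inv_nonneg.2 hkpos.le)]
  rw [le_inv_mul_iff₀ hkpos, mul_comm]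
  exact habs

lemma card_Nset (M : ℕ) {k : ℕ} (hk : 1 ≤ k) :
    ((Nset (n := n) M k).card : ℝ) ≤ (3*((M:ℝ)+2))^n * (k:ℝ)^n := by
  have h1 : (Nset (n := n) M k).card = (2*(M+2)*k+1)^n := by
    rw [Nset, Fintype.card_piFinset]
    simp only [Int.card_Icc]
    rw [Finset.prod_const, Finset.card_univ, Fintype.card_fin]
    congr 1
    have h : ((M:ℤ)+2)*k + 1 - -(((M:ℤ)+2)*k) = ((2*(M+2)*k+1 : ℕ) : ℤ) := by push_cast; ring
    rw [h, Int.toNat_natCast]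
  have h2 : (2*(M+2)*k+1) ≤ 3*(M+2)*k := by nlinarith
  calc ((Nset (n := n) M k).card : ℝ) = ((2*(M+2)*k+1 : ℕ) : ℝ)^n := by rw [h1]; push_cast; ring
    _ ≤ ((3*(M+2)*k : ℕ) : ℝ)^n := by
        apply pow_le_pow_left₀ (by positivity)
        exact_mod_cast h2
    _ = (3*((M:ℝ)+2))^n * (k:ℝ)^n := by push_cast [mul_pow]; ring

lemma volume_box : (volume (Box n)) = 1 := by
  rw [Box, volume_pi_pi]
  simp [Real.volume_Ico]

lemma cont_aux {β : (Fin n → ℝ) → ℝ} (hβ : Continuous β) {c : ℝ}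
    (x₀ : Fin n → ℝ) : Continuous (fun w : Fin n → ℝ => β (c • (w + x₀))) :=
  hβ.comp ((continuous_id.add continuous_const).const_smul c)

lemma cpt_aux {β : (Fin n → ℝ) → ℝ} (hβc : HasCompactSupport β) {c : ℝ} (hc : c ≠ 0)
    (x₀ : Fin n → ℝ) : HasCompactSupport (fun w : Fin n → ℝ => β (c • (w + x₀))) := by
  have h : (fun w : Fin n → ℝ => β (c • (w + x₀)))
      = β ∘ ((Homeomorph.addRight x₀).trans (Homeomorph.smulOfNeZero c hc)) := rfl
  rw [h]
  exact hβc.comp_homeomorph _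

lemma int_aux {β : (Fin n → ℝ) → ℝ} (hβ : Continuous β) (hβc : HasCompactSupport β) {c : ℝ}
    (hc : c ≠ 0) (x₀ : Fin n → ℝ) :
    Integrable (fun w : Fin n → ℝ => β (c • (w + x₀))) volume :=
  (cont_aux hβ x₀).integrable_of_hasCompactSupport (cpt_aux hβc hc x₀)

lemma one_eq {β : (Fin n → ℝ) → ℝ} (hβ : Continuous β) (hβc : HasCompactSupport β)
    {k : ℕ} (hk : 1 ≤ k) (x : Fin n → ℝ) :
    (k:ℝ)^n * (∫ y, β y) =
      ∑' e : Fin n → ℤ, ∫ u in Box n, β ((k:ℝ)⁻¹ • (u + cz e + x)) := by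
  have hkpos : (0:ℝ) < k := by exact_mod_cast hk
  have hkne : ((k:ℝ))⁻¹ ≠ 0 := inv_ne_zero hkpos.ne'
  have hdec := decomp (volume : Measure (Fin n → ℝ)) id measurable_id
    (fun e u => u + cz e) (fun e => measurePreserving_add_right volume (cz e))
    (fun e => (Homeomorph.addRight (cz e)).measurableEmbedding)
    (fun e z => rfl)
    (fun w => β ((k:ℝ)⁻¹ • (w + x))) (int_aux hβ hβc hkne x)
  rw [Set.preimage_id] at hdec
  rw [← hdec]
  have h1 : ∫ w : Fin n → ℝ, β ((k:ℝ)⁻¹ • (w + x)) = ∫ w : Fin n → ℝ, β ((k:ℝ)⁻¹ • w) :=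
    integral_add_right_eq_self (fun w => β ((k:ℝ)⁻¹ • w)) x
  rw [h1, Measure.integral_comp_inv_smul_of_nonneg volume β hkpos.le,
    Module.finrank_fin_fun, smul_eq_mul]

lemma norm_le_one_of_box {u : Fin n → ℝ} (hu : u ∈ Box n) : ‖u‖ ≤ 1 := by
  refine (pi_norm_le_iff_of_nonneg zero_le_one).2 fun i => ?_
  have h := Set.mem_univ_pi.mp hu i
  rw [Real.norm_eq_abs, abs_le]
  exact ⟨by linarith [h.1], by linarith [h.2]⟩

lemma key {β : (Fin n → ℝ) → ℝ} (hβ : Continuous β) (hβc : HasCompactSupport β)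
    (hβint : (∫ y, β y) = 1) {M : ℕ}
    (hM : ∀ (y : Fin n → ℝ) (i : Fin n), (M : ℝ) ≤ |y i| → β y = 0)
    {ε : ℝ} (hε : 0 < ε) :
    ∃ k₀ : ℕ, 1 ≤ k₀ ∧ ∀ k, k₀ ≤ k → ∀ x ∈ Box n,
      |((k:ℝ)^n)⁻¹ * (∑ e ∈ Nset M k, β ((k:ℝ)⁻¹ • (x + cz e))) - 1| ≤ ε := by
  set ε' := ε / (3*((M:ℝ)+2))^n with hε'def
  have hden : (0:ℝ) < (3*((M:ℝ)+2))^n := by positivity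
  have hε' : 0 < ε' := div_pos hε hden
  obtain ⟨δ, hδ, hδ'⟩ := Metric.uniformContinuous_iff.mp
    (hβc.uniformContinuous_of_continuous hβ) ε' hε'
  refine ⟨max 1 (⌈δ⁻¹⌉₊ + 1), le_max_left _ _, fun k hkk x hx => ?_⟩
  have hk1 : 1 ≤ k := le_trans (le_max_left _ _) hkk
  have hkpos : (0:ℝ) < k := by exact_mod_cast hk1
  have hkne : ((k:ℝ))⁻¹ ≠ 0 := inv_ne_zero hkpos.ne'
  have hknpos : (0:ℝ) < (k:ℝ)^n := by positivity
  have hkδ : (k:ℝ)⁻¹ < δ := by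
    have h1 : (⌈δ⁻¹⌉₊ + 1 : ℕ) ≤ k := le_trans (le_max_right _ _) hkk
    have h2 : δ⁻¹ < (k:ℝ) := by
      calc δ⁻¹ ≤ (⌈δ⁻¹⌉₊ : ℝ) := Nat.le_ceil _
        _ < ((⌈δ⁻¹⌉₊ + 1 : ℕ) : ℝ) := by push_cast; linarith
        _ ≤ k := by exact_mod_cast h1
    have h3 : (k:ℝ)⁻¹ * δ⁻¹ < (k:ℝ)⁻¹ * (k:ℝ) :=
      mul_lt_mul_of_pos_left h2 (inv_pos.2 hkpos)
    rw [inv_mul_cancel₀ hkpos.ne'] at h3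
    have h4 : (k:ℝ)⁻¹ * δ⁻¹ * δ < 1 * δ := mul_lt_mul_of_pos_right h3 hδ
    rwa [mul_assoc, inv_mul_cancel₀ hδ.ne', mul_one, one_mul] at h4
  have hxbd : ∀ i, |x i| ≤ 1 := by
    intro i
    have h := Set.mem_univ_pi.mp hx i
    rw [abs_le]
    exact ⟨by linarith [h.1], by linarith [h.2]⟩
  set Ie : (Fin n → ℤ) → ℝ := fun e => ∫ u in Box n, β ((k:ℝ)⁻¹ • (u + cz e + x)) with hIe
  have hone : (k:ℝ)^n = ∑ e ∈ Nset M k, Ie e := by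
    have h0 := one_eq hβ hβc hk1 x
    rw [hβint, mul_one] at h0
    rw [h0]
    apply tsum_eq_sum
    intro e he
    have heq : Set.EqOn (fun u => β ((k:ℝ)⁻¹ • (u + cz e + x))) (fun _ => (0:ℝ)) (Box n) := by
      intro u hu
      have h2 : u + cz e + x = (u + x) + cz e := by abel
      show β ((k:ℝ)⁻¹ • (u + cz e + x)) = 0
      rw [h2]
      refine vanish hM hk1 he (u + x) fun i => ?_
      have h3 := Set.mem_univ_pi.mp hu i
      have h4 := hxbd i
      rw [Pi.add_apply, abs_le]
      rw [abs_le] at h4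
      exact ⟨by linarith [h3.1, h4.1], by linarith [h3.2, h4.2]⟩
    rw [setIntegral_congr_fun measurableSet_box heq, integral_zero]
  have hterm : ∀ e ∈ Nset M k, |β ((k:ℝ)⁻¹ • (x + cz e)) - Ie e| ≤ ε' := by
    intro e _
    have hvol : volume (Box n) < ⊤ := by rw [volume_box]; exact ENNReal.one_lt_top
    have hconst : β ((k:ℝ)⁻¹ • (x + cz e))
        = ∫ _ in Box n, β ((k:ℝ)⁻¹ • (x + cz e)) := by
      rw [setIntegral_const, measureReal_def, volume_box]; simp
    have hint2 : IntegrableOn (fun u => β ((k:ℝ)⁻¹ • (u + cz e + x))) (Box n) volume := by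
      have h5 : (fun u : Fin n → ℝ => β ((k:ℝ)⁻¹ • (u + cz e + x)))
          = fun u => β ((k:ℝ)⁻¹ • (u + (cz e + x))) := by
        funext u; rw [add_assoc]
      rw [h5]
      exact (int_aux hβ hβc hkne (cz e + x)).integrableOn
    have hint1 : IntegrableOn (fun _ : Fin n → ℝ => β ((k:ℝ)⁻¹ • (x + cz e))) (Box n) volume :=
      integrableOn_const hvol.ne
    rw [hconst, hIe, ← integral_sub hint1 hint2]
    have hbd : ∀ u ∈ Box n,
        ‖β ((k:ℝ)⁻¹ • (x + cz e)) - β ((k:ℝ)⁻¹ • (u + cz e + x))‖ ≤ ε' := by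
      intro u hu
      have hdist : dist ((k:ℝ)⁻¹ • (x + cz e)) ((k:ℝ)⁻¹ • (u + cz e + x)) < δ := by
        rw [dist_eq_norm, ← smul_sub]
        have h3 : (x + cz e) - (u + cz e + x) = -u := by abel
        rw [h3, norm_smul, norm_neg]
        calc ‖(k:ℝ)⁻¹‖ * ‖u‖ ≤ ‖(k:ℝ)⁻¹‖ * 1 := by
              exact mul_le_mul_of_nonneg_left (norm_le_one_of_box hu) (norm_nonneg _)
          _ = (k:ℝ)⁻¹ := by rw [mul_one, Real.norm_eq_abs, abs_of_pos (inv_pos.2 hkpos)]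
          _ < δ := hkδ
      have h6 := hδ' hdist
      rw [Real.dist_eq] at h6
      exact le_of_lt h6
    calc ‖∫ u in Box n, (β ((k:ℝ)⁻¹ • (x + cz e)) - β ((k:ℝ)⁻¹ • (u + cz e + x)))‖
        ≤ ε' * (volume (Box n)).toReal :=
          norm_setIntegral_le_of_norm_le_const hvol hbd
      _ = ε' := by rw [volume_box]; simp
  have hsum : ((k:ℝ)^n)⁻¹ * (∑ e ∈ Nset M k, β ((k:ℝ)⁻¹ • (x + cz e))) - 1
      = ((k:ℝ)^n)⁻¹ * ∑ e ∈ Nset M k, (β ((k:ℝ)⁻¹ • (x + cz e)) - Ie e) := by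
    rw [Finset.sum_sub_distrib, mul_sub, ← hone, inv_mul_cancel₀ hknpos.ne']
  rw [hsum, abs_mul, abs_of_nonneg (inv_nonneg.2 hknpos.le)]
  calc ((k:ℝ)^n)⁻¹ * |∑ e ∈ Nset M k, (β ((k:ℝ)⁻¹ • (x + cz e)) - Ie e)|
      ≤ ((k:ℝ)^n)⁻¹ * ∑ e ∈ Nset M k, |β ((k:ℝ)⁻¹ • (x + cz e)) - Ie e| := by
        exact mul_le_mul_of_nonneg_left (Finset.abs_sum_le_sum_abs _ _) (inv_nonneg.2 hknpos.le)
    _ ≤ ((k:ℝ)^n)⁻¹ * (((Nset (n := n) M k).card : ℝ) * ε') := by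
        refine mul_le_mul_of_nonneg_left ?_ (inv_nonneg.2 hknpos.le)
        have := Finset.sum_le_card_nsmul (Nset M k) _ ε' hterm
        rwa [nsmul_eq_mul] at this
    _ ≤ ((k:ℝ)^n)⁻¹ * ((3*((M:ℝ)+2))^n * (k:ℝ)^n * ε') := by
        refine mul_le_mul_of_nonneg_left ?_ (inv_nonneg.2 hknpos.le)
        exact mul_le_mul_of_nonneg_right (card_Nset M hk1) hε'.le
    _ = ε := by
        rw [hε'def]
        field_simp

lemma box_subset_Icc : Box n ⊆ Set.Icc (0 : Fin n → ℝ) 1 := fun x hx =>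
  ⟨fun i => (Set.mem_univ_pi.mp hx i).1, fun i => le_of_lt (Set.mem_univ_pi.mp hx i).2⟩

variable {μ : Measure (ℝ × (Fin n → ℝ))} [IsLocallyFiniteMeasure μ]

lemma meas_D : MeasurableSet ((Set.Ioi (0:ℝ)) ×ˢ Box n) :=
  measurableSet_Ioi.prod measurableSet_box

lemma setIntegral_univ_box (g : ℝ × (Fin n → ℝ) → ℝ)
    (hg : ∀ z : ℝ × (Fin n → ℝ), z.1 ∉ Set.Ioi (0:ℝ) → g z = 0) :
    ∫ z in (Set.univ : Set ℝ) ×ˢ Box n, g z ∂μ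
      = ∫ z in (Set.Ioi (0:ℝ)) ×ˢ Box n, g z ∂μ := by
  have h1 : Set.EqOn g (((Set.Ioi (0:ℝ)) ×ˢ (Set.univ : Set (Fin n → ℝ))).indicator g)
      ((Set.univ : Set ℝ) ×ˢ Box n) := by
    intro z _
    by_cases h : z.1 ∈ Set.Ioi (0:ℝ)
    · rw [Set.indicator_of_mem (Set.mem_prod.2 ⟨h, Set.mem_univ _⟩) g]
    · rw [Set.indicator_of_notMem (fun hc => h hc.1) g, hg z h]
  rw [setIntegral_congr_fun (MeasurableSet.univ.prod measurableSet_box) h1,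
    setIntegral_indicator (measurableSet_Ioi.prod MeasurableSet.univ)]
  congr 1
  rw [Set.prod_inter_prod, Set.univ_inter, Set.inter_univ]

lemma integrableOn_D {α : ℝ → ℝ} (hα : Continuous α) (hαc : HasCompactSupport α)
    (ψ : ℝ × (Fin n → ℝ) → ℝ) (hψ : Continuous ψ) :
    IntegrableOn (fun z => α z.1 * ψ z) ((Set.Ioi (0:ℝ)) ×ˢ Box n) μ := by
  set g := fun z : ℝ × (Fin n → ℝ) => α z.1 * ψ z with hgdef
  set K := tsupport α ×ˢ (Set.Icc (0 : Fin n → ℝ) 1) with hKdef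
  have hKc : IsCompact K := hαc.prod isCompact_Icc
  have hKm : MeasurableSet K := (isClosed_tsupport α).measurableSet.prod measurableSet_Icc
  have hgK : IntegrableOn g K μ :=
    ((hα.comp continuous_fst).mul hψ).continuousOn.integrableOn_compact hKc
  have hDm : MeasurableSet ((Set.Ioi (0:ℝ)) ×ˢ Box n) := meas_D
  have heq : ((Set.Ioi (0:ℝ)) ×ˢ Box n).indicator g
      = K.indicator (((Set.Ioi (0:ℝ)) ×ˢ Box n).indicator g) := by
    funext z
    by_cases hzK : z ∈ K
    · rw [Set.indicator_of_mem hzK]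
    · rw [Set.indicator_of_notMem hzK]
      by_cases hzD : z ∈ (Set.Ioi (0:ℝ)) ×ˢ Box n
      · rw [Set.indicator_of_mem hzD]
        have hα0 : α z.1 = 0 := by
          apply image_eq_zero_of_notMem_tsupport
          intro hmem
          exact hzK (Set.mem_prod.2 ⟨hmem, box_subset_Icc hzD.2⟩)
        simp [hgdef, hα0]
      · rw [Set.indicator_of_notMem hzD]
  have h1 : IntegrableOn (((Set.Ioi (0:ℝ)) ×ˢ Box n).indicator g) K μ := by
    refine (integrable_indicator_iff hDm).2 ?_
    show Integrable g ((μ.restrict K).restrict ((Set.Ioi (0:ℝ)) ×ˢ Box n))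
    rw [Measure.restrict_restrict hDm]
    exact hgK.mono_set Set.inter_subset_right
  have h2 : Integrable (K.indicator (((Set.Ioi (0:ℝ)) ×ˢ Box n).indicator g)) μ :=
    (integrable_indicator_iff hKm).2 h1
  rw [← heq] at h2
  exact (integrable_indicator_iff hDm).1 h2

lemma identA {α : ℝ → ℝ} (hα : Continuous α) (hαc : HasCompactSupport α)
    (hαsupp : tsupport α ⊆ Set.Ioi 0)
    {β : (Fin n → ℝ) → ℝ} (hβ : Continuous β) (hβc : HasCompactSupport β)
    {M : ℕ} (hM : ∀ (y : Fin n → ℝ) (i : Fin n), (M : ℝ) ≤ |y i| → β y = 0)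
    (hper : ∀ e : Fin n → ℤ,
      MeasurePreserving (fun z : ℝ × (Fin n → ℝ) => (z.1, z.2 + fun i => (e i : ℝ))) μ μ)
    {k : ℕ} (hk : 1 ≤ k) :
    ((k:ℝ)^n)⁻¹ * ∫ z, α z.1 * β ((k:ℝ)⁻¹ • z.2) ∂μ
      = ∫ z in (Set.Ioi (0:ℝ)) ×ˢ Box n, α z.1 *
          (((k:ℝ)^n)⁻¹ * ∑ e ∈ Nset M k, β ((k:ℝ)⁻¹ • (z.2 + cz e))) ∂μ := by
  have hkpos : (0:ℝ) < k := by exact_mod_cast hk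
  have hkne : ((k:ℝ))⁻¹ ≠ 0 := inv_ne_zero hkpos.ne'
  set g : (Fin n → ℝ) → ℝ := fun x => β ((k:ℝ)⁻¹ • x) with hgdef
  have hg : Continuous g := hβ.comp (continuous_const_smul _)
  have hgc : HasCompactSupport g := by
    have h : g = β ∘ (Homeomorph.smulOfNeZero ((k:ℝ)⁻¹) hkne) := rfl
    rw [h]
    exact hβc.comp_homeomorph _
  set f : ℝ × (Fin n → ℝ) → ℝ := fun z => α z.1 * g z.2 with hfdef
  have hf : Continuous f := (hα.comp continuous_fst).mul (hg.comp continuous_snd)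
  have hfc : HasCompactSupport f := by
    apply HasCompactSupport.intro (hαc.prod hgc)
    intro z hz
    rw [Set.mem_prod, not_and_or] at hz
    rcases hz with h | h
    · show α z.1 * g z.2 = 0
      rw [image_eq_zero_of_notMem_tsupport h, zero_mul]
    · show α z.1 * g z.2 = 0
      rw [image_eq_zero_of_notMem_tsupport h, mul_zero]
  have hfInt : Integrable f μ := hf.integrable_of_hasCompactSupport hfc
  set T : (Fin n → ℤ) → ℝ × (Fin n → ℝ) → ℝ × (Fin n → ℝ) :=
    fun e z => (z.1, z.2 + cz e) with hTdef
  have hTemb : ∀ e, MeasurableEmbedding (T e) := by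
    intro e
    have h : T e = ⇑((Homeomorph.refl ℝ).prodCongr (Homeomorph.addRight (cz e))) := rfl
    rw [h]
    exact (Homeomorph.measurableEmbedding _)
  have hdec := decomp μ Prod.snd measurable_snd T (fun e => hper e) hTemb
    (fun e z => rfl) f hfInt
  have hsnd : (Prod.snd ⁻¹' Box n : Set (ℝ × (Fin n → ℝ))) = (Set.univ : Set ℝ) ×ˢ Box n := by
    ext z; simp [Set.mem_prod]
  rw [hsnd] at hdec
  have hα0 : ∀ z : ℝ × (Fin n → ℝ), z.1 ∉ Set.Ioi (0:ℝ) → α z.1 = 0 := fun z hz =>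
    image_eq_zero_of_notMem_tsupport (fun hmem => hz (hαsupp hmem))
  have hdec2 : ∫ z, f z ∂μ = ∑' e : Fin n → ℤ,
      ∫ z in (Set.Ioi (0:ℝ)) ×ˢ Box n, f (T e z) ∂μ := by
    rw [hdec]
    exact tsum_congr fun e => setIntegral_univ_box _ fun z hz => by
      show α z.1 * g (z.2 + cz e) = 0
      rw [hα0 z hz, zero_mul]
  have hvan : ∀ e ∉ Nset (n := n) M k,
      ∫ z in (Set.Ioi (0:ℝ)) ×ˢ Box n, f (T e z) ∂μ = 0 := by
    intro e he
    have heq : Set.EqOn (fun z : ℝ × (Fin n → ℝ) => f (T e z)) (fun _ => (0:ℝ))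
        ((Set.Ioi (0:ℝ)) ×ˢ Box n) := by
      intro z hz
      show α z.1 * g (z.2 + cz e) = 0
      have h2 : g (z.2 + cz e) = 0 := by
        apply vanish hM hk he
        intro i
        have h3 := Set.mem_univ_pi.mp hz.2 i
        rw [abs_le]
        exact ⟨by linarith [h3.1], by linarith [h3.2]⟩
      rw [h2, mul_zero]
    rw [setIntegral_congr_fun meas_D heq, integral_zero]
  have hsum := tsum_eq_sum (L := SummationFilter.unconditional _) hvan
  rw [hsum] at hdec2
  have hIntE : ∀ e ∈ Nset (n := n) M k,
      IntegrableOn (fun z : ℝ × (Fin n → ℝ) => α z.1 * g (z.2 + cz e))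
        ((Set.Ioi (0:ℝ)) ×ˢ Box n) μ := fun e _ =>
    integrableOn_D hα hαc _ (hg.comp (continuous_snd.add continuous_const))
  have hswap : ∑ e ∈ Nset (n := n) M k, ∫ z in (Set.Ioi (0:ℝ)) ×ˢ Box n, f (T e z) ∂μ
      = ∫ z in (Set.Ioi (0:ℝ)) ×ˢ Box n,
          (∑ e ∈ Nset (n := n) M k, α z.1 * g (z.2 + cz e)) ∂μ :=
    (integral_finset_sum _ hIntE).symm
  rw [hdec2, hswap, ← integral_const_mul]
  apply setIntegral_congr_fun meas_D
  intro z _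
  show ((k:ℝ)^n)⁻¹ * ∑ e ∈ Nset (n := n) M k, α z.1 * g (z.2 + cz e) = _
  rw [← Finset.mul_sum]
  ring

end PMSL

/-- Averaging property of an `x`-periodic locally finite nonnegative measure `μ` on
`ℝ_+ × ℝ^n`: `k^{-n} ⟨μ, α(t) β(x/k)⟩ → ∫_{ℝ_+ × 𝕋^n} α(t) dμ` for `α ∈ C₀(ℝ_+)`,
`β ∈ C₀(ℝ^n)` with `∫ β = 1`. -/
theorem periodic_measure_scaling_limit {n : ℕ} (μ : Measure (ℝ × (Fin n → ℝ)))
    [IsLocallyFiniteMeasure μ]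
    (hper : ∀ e : Fin n → ℤ,
      MeasurePreserving (fun z : ℝ × (Fin n → ℝ) => (z.1, z.2 + fun i => (e i : ℝ))) μ μ)
    (α : ℝ → ℝ) (hα : Continuous α) (hαc : HasCompactSupport α)
    (hαsupp : tsupport α ⊆ Set.Ioi 0)
    (β : (Fin n → ℝ) → ℝ) (hβ : Continuous β) (hβc : HasCompactSupport β)
    (hβint : (∫ y, β y) = 1) :
    Tendsto (fun k : ℕ => ((k : ℝ) ^ n)⁻¹ *
        ∫ z, α z.1 * β (fun i => z.2 i / k) ∂μ) atTop
      (nhds (∫ z in (Set.Ioi (0:ℝ)) ×ˢ Box n, α z.1 ∂μ)) := by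
  classical
  obtain ⟨M, hM1, hM⟩ := PMSL.exists_bound hβc
  have hIint : IntegrableOn (fun z : ℝ × (Fin n → ℝ) => α z.1)
      ((Set.Ioi (0:ℝ)) ×ˢ Box n) μ := by
    have h := PMSL.integrableOn_D (μ := μ) hα hαc (fun _ => (1:ℝ)) continuous_const
    simpa using h
  set I := ∫ z in (Set.Ioi (0:ℝ)) ×ˢ Box n, α z.1 ∂μ with hI
  set C := ∫ z in (Set.Ioi (0:ℝ)) ×ˢ Box n, ‖α z.1‖ ∂μ with hC
  have hC0 : 0 ≤ C := setIntegral_nonneg PMSL.meas_D fun z _ => norm_nonneg _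
  rw [Metric.tendsto_atTop]
  intro ε hε
  have hε'' : (0:ℝ) < ε / (2*(C+1)) := by positivity
  obtain ⟨k₀, hk₀1, hkey⟩ := PMSL.key hβ hβc hβint hM hε''
  refine ⟨k₀, fun k hk => ?_⟩
  have hk1 : 1 ≤ k := le_trans hk₀1 hk
  have hkpos : (0:ℝ) < k := by exact_mod_cast hk1
  set S : ℝ × (Fin n → ℝ) → ℝ := fun z =>
    ((k:ℝ)^n)⁻¹ * ∑ e ∈ PMSL.Nset M k, β ((k:ℝ)⁻¹ • (z.2 + PMSL.cz e)) with hSdef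
  have hScont : Continuous S :=
    continuous_const.mul (continuous_finset_sum _ fun e _ =>
      hβ.comp (by fun_prop))
  have hSInt : IntegrableOn (fun z => α z.1 * S z) ((Set.Ioi (0:ℝ)) ×ˢ Box n) μ :=
    PMSL.integrableOn_D hα hαc _ hScont
  have harg : (fun z : ℝ × (Fin n → ℝ) => α z.1 * β (fun i => z.2 i / (k:ℝ)))
      = (fun z => α z.1 * β ((k:ℝ)⁻¹ • z.2)) := by
    funext z
    congr 2
    funext i
    rw [Pi.smul_apply, smul_eq_mul, div_eq_inv_mul]
  have hFk : ((k:ℝ)^n)⁻¹ * ∫ z, α z.1 * β (fun i => z.2 i / (k:ℝ)) ∂μ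
      = ∫ z in (Set.Ioi (0:ℝ)) ×ˢ Box n, α z.1 * S z ∂μ := by
    rw [congrArg (integral μ) harg]
    exact PMSL.identA hα hαc hαsupp hβ hβc hM hper hk1
  rw [Real.dist_eq, hFk, hI, ← integral_sub hSInt hIint]
  have hstep : |∫ z in (Set.Ioi (0:ℝ)) ×ˢ Box n, (α z.1 * S z - α z.1) ∂μ|
      ≤ ∫ z in (Set.Ioi (0:ℝ)) ×ˢ Box n, ‖α z.1‖ * (ε / (2*(C+1))) ∂μ := by
    calc |∫ z in (Set.Ioi (0:ℝ)) ×ˢ Box n, (α z.1 * S z - α z.1) ∂μ|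
        ≤ ∫ z in (Set.Ioi (0:ℝ)) ×ˢ Box n, ‖α z.1 * S z - α z.1‖ ∂μ := by
          rw [← Real.norm_eq_abs]
          exact norm_integral_le_integral_norm _
      _ ≤ ∫ z in (Set.Ioi (0:ℝ)) ×ˢ Box n, ‖α z.1‖ * (ε / (2*(C+1))) ∂μ := by
          refine setIntegral_mono_on ((hSInt.sub hIint).norm)
            (hIint.norm.mul_const _) PMSL.meas_D fun z hz => ?_
          have h1 : α z.1 * S z - α z.1 = α z.1 * (S z - 1) := by ring
          rw [h1, norm_mul]
          refine mul_le_mul_of_nonneg_left ?_ (norm_nonneg _)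
          rw [Real.norm_eq_abs]
          exact hkey k hk z.2 hz.2
  have hfin : ∫ z in (Set.Ioi (0:ℝ)) ×ˢ Box n, ‖α z.1‖ * (ε / (2*(C+1))) ∂μ
      = C * (ε / (2*(C+1))) := by rw [integral_mul_const]
  have hlast : C * (ε / (2*(C+1))) < ε := by
    rw [div_eq_inv_mul]
    have h2 : (0:ℝ) < 2*(C+1) := by linarith
    rw [mul_comm, mul_assoc]
    have h3 : (2*(C+1))⁻¹ * C < 1 := by
      rw [inv_mul_lt_iff₀ h2]
      linarith
    nlinarith
  calc |∫ z in (Set.Ioi (0:ℝ)) ×ˢ Box n, (α z.1 * S z - α z.1) ∂μ|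
      ≤ C * (ε / (2*(C+1))) := by rw [← hfin]; exact hstep
    _ < ε := hlast
end
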